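/- Let H = (P^T | −I_{n−k}) be a generator matrix of the dual code D of a systematic [n,k] code. The star products of rows h_j, h_{j'} of H satisfy: h_j * h_j = (q_j * q_j | e_j) and, for j < j', h_j * h_{j'} = (q_j * q_{j'} | 0), where q_j is the j-th row of P^T and e_j the j-th standard basis vector of F_q^{n−k}. Consequently dim D^(2) = (n−k) + rank(M_1), where M_1 is the k × binom(n−k,2) matrix with entries p_{i,j} p_{i,j'} for 1 ≤ i ≤ k and k < j < j' ≤ n. -/

import Mathlib

open Matrix Module

open Pointwise

/-- The span of all coordinatewise (star) products of elements of `A` and `B`. -/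
def starSpan {F : Type*} [Field F] {ι : Type*} (A B : Submodule F (ι → F)) :
    Submodule F (ι → F) :=
  Submodule.span F {x | ∃ a ∈ A, ∃ b ∈ B, x = a * b}

/-- The linear system `L_P` of Faugère et al.: `k` linear equations
`∑_{j < j'} p_{ij} p_{ij'} Z_{jj'} = 0` (`1 ≤ i ≤ k`) in the `binom(m,2)` variables
`Z_{jj'}` indexed by pairs `j < j'` with `k < j < j' ≤ n`, `m = n - k`. Its kernel is
the solution space `K(L_P)`. -/
noncomputable def LPmap {F : Type*} [Field F] {k m : ℕ} (P : Matrix (Fin k) (Fin m) F) :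
    ({p : Fin m × Fin m // p.1 < p.2} → F) →ₗ[F] (Fin k → F) :=
  LinearMap.pi fun i => ∑ p : {p : Fin m × Fin m // p.1 < p.2},
    (P i p.1.1 * P i p.1.2) • LinearMap.proj p

/-- The rows of the parity check matrix `H = (Pᵀ | -I_{n-k})` of the code with systematic
generator matrix `G = (I_k | P)`; the `n` coordinates are indexed by `Fin k ⊕ Fin m` with
`m = n - k`. -/
def Hrows {F : Type*} [Field F] {k m : ℕ} (P : Matrix (Fin k) (Fin m) F) :
    Fin m → (Fin k ⊕ Fin m → F) :=
  fun r => Sum.elim (fun i => P i r) (fun s => if r = s then -1 else 0)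

/-- The `k × binom(n-k, 2)` matrix `M₁` with entries `p_{ij} p_{ij'}` for `1 ≤ i ≤ k` and
pairs `j < j'`. -/
def M1 {F : Type*} [Field F] {k m : ℕ} (P : Matrix (Fin k) (Fin m) F) :
    Matrix (Fin k) {p : Fin m × Fin m // p.1 < p.2} F :=
  fun i p => P i p.1.1 * P i p.1.2


section Aux

variable {F : Type*} [Field F] {k m : ℕ} (P : Matrix (Fin k) (Fin m) F)

lemma hrows_mul_self (r : Fin m) : Hrows P r * Hrows P r =
    Sum.elim (fun i => P i r * P i r) (fun s => if r = s then 1 else 0) := by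
  funext x
  cases x with
  | inl i => rfl
  | inr s =>
    simp only [Pi.mul_apply, Hrows, Sum.elim_inr]
    split_ifs <;> simp

lemma hrows_mul_lt (r r' : Fin m) (h : r < r') : Hrows P r * Hrows P r' =
    Sum.elim (fun i => P i r * P i r') (fun _ => 0) := by
  funext x
  cases x with
  | inl i => rfl
  | inr s =>
    simp only [Pi.mul_apply, Hrows, Sum.elim_inr]
    rcases eq_or_ne r s with rfl | hr
    · rw [if_neg (show ¬ r' = r from fun hh => absurd hh h.ne'), mul_zero]
    · rw [if_neg hr, zero_mul]

/-- extension by zero on the second block of coordinates -/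
def extZero (F : Type*) [Field F] (k m : ℕ) : (Fin k → F) →ₗ[F] (Fin k ⊕ Fin m → F) where
  toFun w := Sum.elim w 0
  map_add' w w' := by funext x; cases x <;> simp
  map_smul' c w := by funext x; cases x <;> simp

lemma extZero_injective (F : Type*) [Field F] (k m : ℕ) :
    Function.Injective (extZero F k m) := by
  intro w w' h
  funext i
  exact congrFun h (Sum.inl i)

end Aux

/-- For `H = (Pᵀ | -I_{n-k})` a generator matrix of the dual `D` of a systematic `[n, k]`
code: the star products of the rows `h_j` of `H` satisfy `h_j * h_j = (q_j * q_j | e_j)`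
and `h_j * h_{j'} = (q_j * q_{j'} | 0)` for `j < j'`, where `q_j` is the `j`-th row of
`Pᵀ` and `e_j` the `j`-th standard basis vector; consequently
`dim D^(2) = (n - k) + rank M₁`. -/
theorem stmt15 {F : Type*} [Field F] [DecidableEq F] {k m : ℕ}
    (P : Matrix (Fin k) (Fin m) F) :
    (∀ r : Fin m, Hrows P r * Hrows P r =
        Sum.elim (fun i => P i r * P i r) (fun s => if r = s then 1 else 0)) ∧
    (∀ r r' : Fin m, r < r' → Hrows P r * Hrows P r' =
        Sum.elim (fun i => P i r * P i r') (fun _ => 0)) ∧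
    Module.finrank F
        (starSpan (Submodule.span F (Set.range (Hrows P)))
          (Submodule.span F (Set.range (Hrows P)))) = m + (M1 P).rank := by
  classical
  refine ⟨hrows_mul_self P, hrows_mul_lt P, ?_⟩
  set D := Submodule.span F (Set.range (Hrows P)) with hD
  set g : Fin m ⊕ {p : Fin m × Fin m // p.1 < p.2} → (Fin k ⊕ Fin m → F) :=
    Sum.elim (fun r => Hrows P r * Hrows P r)
      (fun p => Hrows P p.1.1 * Hrows P p.1.2) with hg
  -- Step 1: the square code is spanned by the pairwise products of the rows
  have hstar : starSpan D D = Submodule.span F (Set.range g) := by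
    have h1 : {x | ∃ a ∈ D, ∃ b ∈ D, x = a * b}
        = (D : Set (Fin k ⊕ Fin m → F)) * (D : Set (Fin k ⊕ Fin m → F)) := by
      ext x
      simp only [Set.mem_mul, Set.mem_setOf_eq]
      constructor
      · rintro ⟨a, ha, b, hb, rfl⟩; exact ⟨a, ha, b, hb, rfl⟩
      · rintro ⟨a, ha, b, hb, rfl⟩; exact ⟨a, ha, b, hb, rfl⟩
    have h2 : starSpan D D =
        Submodule.span F (Set.range (Hrows P) * Set.range (Hrows P)) := by
      rw [starSpan, h1]
      rw [show (Submodule.span F ((D : Set (Fin k ⊕ Fin m → F))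
            * (D : Set (Fin k ⊕ Fin m → F))) : Submodule F (Fin k ⊕ Fin m → F))
          = D * D by rw [← Submodule.span_mul_span, Submodule.span_eq], hD,
        Submodule.span_mul_span]
    rw [h2]
    apply le_antisymm
    · rw [Submodule.span_le]
      rintro x hx
      rw [Set.mem_mul] at hx
      obtain ⟨a, ⟨r, rfl⟩, b, ⟨r', rfl⟩, rfl⟩ := hx
      rcases lt_trichotomy r r' with h | h | h
      · exact Submodule.subset_span ⟨Sum.inr ⟨(r, r'), h⟩, rfl⟩
      · subst h; exact Submodule.subset_span ⟨Sum.inl r, rfl⟩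
      · rw [mul_comm]
        exact Submodule.subset_span ⟨Sum.inr ⟨(r', r), h⟩, rfl⟩
    · rw [Submodule.span_le]
      rintro x ⟨i, rfl⟩
      cases i with
      | inl r => exact Submodule.subset_span (Set.mul_mem_mul ⟨r, rfl⟩ ⟨r, rfl⟩)
      | inr p => exact Submodule.subset_span (Set.mul_mem_mul ⟨p.1.1, rfl⟩ ⟨p.1.2, rfl⟩)
  rw [hstar]
  set D2 := Submodule.span F (Set.range g) with hD2
  set f : (Fin k ⊕ Fin m → F) →ₗ[F] (Fin m → F) :=
    LinearMap.funLeft F F Sum.inr with hf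
  set ι := extZero F k m with hι
  set Q := Submodule.span F (Set.range (M1 P)ᵀ) with hQ
  -- key identities
  have hginr : ∀ p : {p : Fin m × Fin m // p.1 < p.2}, g (Sum.inr p) = ι ((M1 P)ᵀ p) := by
    intro p
    show Hrows P p.1.1 * Hrows P p.1.2 = _
    rw [hrows_mul_lt P p.1.1 p.1.2 p.2]
    rfl
  have hfg : ∀ r, f (g (Sum.inl r)) = fun s => if r = s then 1 else 0 := by
    intro r
    show f (Hrows P r * Hrows P r) = _
    rw [hrows_mul_self]
    rfl
  have hfι : ∀ w, f (ι w) = 0 := fun w => rfl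
  -- the projection maps D2 onto everything
  have hmap : D2.map f = ⊤ := by
    rw [eq_top_iff, ← (Pi.basisFun F (Fin m)).span_eq, Submodule.span_le]
    rintro _ ⟨r, rfl⟩
    refine ⟨g (Sum.inl r), Submodule.subset_span ⟨Sum.inl r, rfl⟩, ?_⟩
    rw [hfg r]
    funext s
    simp [Pi.basisFun_apply, Pi.single_apply, eq_comm]
  -- the kernel part
  have hinf : D2 ⊓ LinearMap.ker f = Q.map ι := by
    apply le_antisymm
    · intro x hx
      obtain ⟨hxS, hxk⟩ := Submodule.mem_inf.mp hx
      rw [hD2, Submodule.mem_span_range_iff_exists_fun] at hxS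
      obtain ⟨c, hc⟩ := hxS
      rw [Fintype.sum_sum_type] at hc
      have hc0 : ∀ r, c (Sum.inl r) = 0 := by
        intro r
        have hx : x (Sum.inr r) = 0 := congrFun (LinearMap.mem_ker.mp hxk) r
        have h2 := congrFun hc (Sum.inr r)
        rw [hx] at h2
        simp only [Pi.add_apply, Finset.sum_apply, Pi.smul_apply, smul_eq_mul] at h2
        have e1 : ∀ r' : Fin m, g (Sum.inl r') (Sum.inr r)
            = if r' = r then 1 else 0 := by
          intro r'
          show (Hrows P r' * Hrows P r') (Sum.inr r) = _
          rw [hrows_mul_self]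
          rfl
        have e2 : ∀ p : {p : Fin m × Fin m // p.1 < p.2},
            g (Sum.inr p) (Sum.inr r) = 0 := by
          intro p
          rw [hginr]
          rfl
        simp only [e1, e2, mul_zero, mul_ite, mul_one, Finset.sum_const_zero, add_zero,
          Finset.sum_ite_eq' Finset.univ r (fun r' => c (Sum.inl r')),
          Finset.mem_univ, if_true] at h2
        exact h2.symm ▸ h2
      have hx2 : x = ι (∑ p, c (Sum.inr p) • (M1 P)ᵀ p) := by
        rw [map_sum]
        rw [← hc]
        have : ∀ r : Fin m, c (Sum.inl r) • g (Sum.inl r) = 0 := by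
          intro r; rw [hc0 r, zero_smul]
        simp only [this, Finset.sum_const_zero, zero_add]
        refine Finset.sum_congr rfl fun p _ => ?_
        rw [hginr]
        exact (ι.map_smul _ _).symm
      rw [hx2]
      exact Submodule.mem_map_of_mem
        (Submodule.sum_mem _ fun p _ => Submodule.smul_mem _ _
          (Submodule.subset_span ⟨p, rfl⟩))
    · rw [hQ, Submodule.map_span, Submodule.span_le]
      rintro _ ⟨_, ⟨p, rfl⟩, rfl⟩
      refine ⟨?_, ?_⟩
      · rw [hD2]
        exact Submodule.subset_span ⟨Sum.inr p, (hginr p).symm ▸ rfl⟩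
      · exact LinearMap.mem_ker.mpr (hfι _)
  -- rank-nullity
  have hrn := LinearMap.finrank_range_add_finrank_ker (f.domRestrict D2)
  rw [LinearMap.range_domRestrict, hmap, finrank_top,
    Module.finrank_fintype_fun_eq_card, Fintype.card_fin] at hrn
  have hker : Module.finrank F ↥(LinearMap.ker (f.domRestrict D2)) = (M1 P).rank := by
    rw [LinearMap.ker_domRestrict]
    have h3 := Submodule.finrank_map_subtype_eq D2
      (Submodule.comap D2.subtype (LinearMap.ker f))
    rw [Submodule.map_comap_subtype, hinf] at h3
    rw [← h3, LinearEquiv.finrank_eq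
      (Submodule.equivMapOfInjective ι (extZero_injective F k m) Q).symm,
      Matrix.rank_eq_finrank_span_cols]
    rfl
  rw [hker] at hrn
  exact hrn.symm
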